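/- Let Ω : ℝ² → ℝ be a C² function that is 2π-periodic in its first variable u, and suppose there exist δ > 0 and C > 0 such that |Ω(u,v)| + |∂Ω(u,v)| + |∂²Ω(u,v)| ≤ C·cosh(v)^{-δ} for all (u,v) (where |∂Ω| and |∂²Ω| denote the norms of the first and second total derivatives). Then ∫_{[0,2π]×ℝ} (1 − v·tanh(v)) · ( ∂²_{uu}Ω(u,v) + ∂²_{vv}Ω(u,v) + 2·Ω(u,v)/cosh²(v) ) du dv = 0. -/

import Mathlib

open Real MeasureTheory Set Filter Topology

noncomputable def psi (v : ℝ) : ℝ := 1 - v * Real.tanh v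
noncomputable def psi' (v : ℝ) : ℝ := -Real.tanh v - v / Real.cosh v ^ 2

lemma hasDerivAt_tanh (v : ℝ) : HasDerivAt Real.tanh (1 / Real.cosh v ^ 2) v := by
  have h := (Real.hasDerivAt_sinh v).div (Real.hasDerivAt_cosh v) (Real.cosh_pos v).ne'
  have he : Real.tanh = fun x => Real.sinh x / Real.cosh x := by
    funext x; exact Real.tanh_eq_sinh_div_cosh x
  rw [he]
  refine h.congr_deriv (Eq.symm ?_)
  have := Real.cosh_sq_sub_sinh_sq v
  field_simp
  nlinarith [this]

lemma hasDerivAt_psi (v : ℝ) : HasDerivAt psi (psi' v) v := by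
  have h := ((hasDerivAt_id v).mul (hasDerivAt_tanh v)).const_sub 1
  refine h.congr_deriv (Eq.symm ?_)
  unfold psi'
  field_simp
  simp only [id_eq]; ring

lemma hasDerivAt_psi' (v : ℝ) : HasDerivAt psi' (-2 * psi v / Real.cosh v ^ 2) v := by
  have hc := (Real.cosh_pos v).ne'
  have hc2 : Real.cosh v ^ 2 ≠ 0 := pow_ne_zero 2 hc
  have h1 : HasDerivAt (fun x => Real.cosh x ^ 2) (2 * Real.cosh v ^ 1 * Real.sinh v) v :=
    (Real.hasDerivAt_cosh v).pow 2
  have h2 := ((hasDerivAt_id v).div h1 hc2)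
  have h3 := ((hasDerivAt_tanh v).neg).sub h2
  refine h3.congr_deriv (Eq.symm ?_)
  unfold psi
  rw [Real.tanh_eq_sinh_div_cosh]
  field_simp
  simp only [id_eq]; ring

lemma abs_tanh_le_one (v : ℝ) : |Real.tanh v| ≤ 1 := by
  have hc := Real.cosh_pos v
  have h : |Real.sinh v| ≤ Real.cosh v := by
    nlinarith [Real.cosh_sq_sub_sinh_sq v, abs_nonneg (Real.sinh v), sq_abs (Real.sinh v)]
  rw [Real.tanh_eq_sinh_div_cosh, abs_div, abs_of_pos hc, div_le_one hc]
  exact h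

lemma abs_psi_le (v : ℝ) : |psi v| ≤ 1 + |v| := by
  unfold psi
  calc |1 - v * Real.tanh v| ≤ |1| + |v * Real.tanh v| := abs_sub _ _
    _ ≤ 1 + |v| := by
        rw [abs_one, abs_mul]
        have := abs_tanh_le_one v
        nlinarith [abs_nonneg v]

lemma abs_psi'_le (v : ℝ) : |psi' v| ≤ 1 + |v| := by
  unfold psi'
  have h1 := abs_tanh_le_one v
  have hc1 : (1:ℝ) ≤ Real.cosh v := Real.one_le_cosh v
  have h2 : |v / Real.cosh v ^ 2| ≤ |v| := by
    rw [abs_div, abs_of_pos (by positivity : (0:ℝ) < Real.cosh v ^ 2)]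
    rw [div_le_iff₀ (by positivity)]
    nlinarith [abs_nonneg v, sq_nonneg (Real.cosh v - 1)]
  calc |(-Real.tanh v - v / Real.cosh v ^ 2)| ≤ |(-Real.tanh v)| + |v / Real.cosh v ^ 2| := abs_sub _ _
    _ ≤ 1 + |v| := by rw [abs_neg]; nlinarith

lemma half_exp_abs_le_cosh (v : ℝ) : Real.exp |v| / 2 ≤ Real.cosh v := by
  rw [Real.cosh_eq]
  rcases abs_cases v with ⟨h, _⟩ | ⟨h, _⟩ <;> rw [h] <;> nlinarith [Real.exp_pos v, Real.exp_pos (-v)]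

lemma integrable_exp_half_abs {b : ℝ} (hb : 0 < b) :
    Integrable (fun v : ℝ => Real.exp (-(b * |v|))) := by
  have hIoi : IntegrableOn (fun v : ℝ => Real.exp (-(b * |v|))) (Ioi 0) := by
    refine (exp_neg_integrableOn_Ioi 0 hb).congr_fun ?_ measurableSet_Ioi
    intro x hx
    show Real.exp (-b * x) = Real.exp (-(b * |x|))
    rw [abs_of_pos hx]
    ring_nf
  have hIci : IntegrableOn (fun v : ℝ => Real.exp (-(b * |v|))) (Ici 0) :=
    (integrableOn_Ici_iff_integrableOn_Ioi).mpr hIoi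
  have hIic : IntegrableOn (fun v : ℝ => Real.exp (-(b * |v|))) (Iic 0) := by
    have h_map_neg : ((volume : Measure ℝ).restrict (Ici 0)).map Neg.neg
        = (volume : Measure ℝ).restrict (Iic 0) := by
      conv => rhs; rw [← Measure.map_neg_eq_self (volume : Measure ℝ),
        measurableEmbedding_neg.restrict_map]
      simp
    rw [IntegrableOn, ← h_map_neg, measurableEmbedding_neg.integrable_map_iff]
    refine hIci.congr_fun ?_ measurableSet_Ici
    intro x _
    simp
  rw [← integrableOn_univ, ← Set.Iic_union_Ioi (a := (0:ℝ)), integrableOn_union]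
  exact ⟨hIic, hIoi⟩

lemma weight_le {δ : ℝ} (hδ : 0 < δ) (v : ℝ) :
    (1 + |v|) * Real.cosh v ^ (-δ) ≤ ((1 + 2/δ) * 2 ^ δ) * Real.exp (-(δ/2 * |v|)) := by
  have h1 : Real.cosh v ^ (-δ) ≤ (Real.exp |v| / 2) ^ (-δ) :=
    Real.rpow_le_rpow_of_nonpos (by positivity) (half_exp_abs_le_cosh v) (by linarith)
  have h2 : (Real.exp |v| / 2) ^ (-δ) = 2 ^ δ * Real.exp (-(δ * |v|)) := by
    rw [Real.div_rpow (Real.exp_pos _).le (by norm_num), Real.rpow_neg (Real.exp_pos _).le,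
      Real.rpow_neg (by norm_num : (0:ℝ) ≤ 2), Real.rpow_def_of_pos (Real.exp_pos _),
      Real.log_exp]
    rw [div_eq_mul_inv, inv_inv, Real.exp_neg, mul_comm δ |v|]
    ring
  have h3 : (1 + |v|) ≤ (1 + 2/δ) * Real.exp (δ/2 * |v|) := by
    have he : δ/2 * |v| + 1 ≤ Real.exp (δ/2 * |v|) := Real.add_one_le_exp _
    have h1e : (1:ℝ) ≤ Real.exp (δ/2 * |v|) := by
      nlinarith [abs_nonneg v]
    have h4 : |v| ≤ 2 * Real.exp (δ/2 * |v|) / δ := by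
      rw [le_div_iff₀ hδ]
      nlinarith [abs_nonneg v]
    have h5 : (1 + 2/δ) * Real.exp (δ/2 * |v|) = Real.exp (δ/2 * |v|) + 2 * Real.exp (δ/2 * |v|) / δ := by
      field_simp
    linarith
  have hcpos : (0:ℝ) < Real.cosh v ^ (-δ) := Real.rpow_pos_of_pos (Real.cosh_pos v) _
  calc (1 + |v|) * Real.cosh v ^ (-δ)
      ≤ ((1 + 2/δ) * Real.exp (δ/2 * |v|)) * (2 ^ δ * Real.exp (-(δ * |v|))) := by
        apply mul_le_mul h3 (h2 ▸ h1) hcpos.le (by positivity)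
    _ = ((1 + 2/δ) * 2 ^ δ) * Real.exp (-(δ/2 * |v|)) := by
        rw [mul_mul_mul_comm, ← Real.exp_add]
        ring_nf

lemma integrable_weight {δ : ℝ} (hδ : 0 < δ) :
    Integrable (fun v : ℝ => (1 + |v|) * Real.cosh v ^ (-δ)) := by
  have hcont : Continuous (fun v : ℝ => (1 + |v|) * Real.cosh v ^ (-δ)) := by
    apply Continuous.mul (by continuity)
    exact Real.continuous_cosh.rpow_const (fun x => Or.inl (Real.cosh_pos x).ne')
  refine Integrable.mono' (((integrable_exp_half_abs (by positivity : (0:ℝ) < δ/2)).const_mul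
    ((1 + 2/δ) * 2 ^ δ))) hcont.aestronglyMeasurable ?_
  filter_upwards with v
  rw [Real.norm_eq_abs, abs_of_nonneg (by positivity)]
  exact weight_le hδ v

section Omega
variable {Ω : ℝ × ℝ → ℝ}

lemma line_u (v : ℝ) (u : ℝ) : HasDerivAt (fun u' : ℝ => (u', v)) ((1 : ℝ), (0 : ℝ)) u :=
  (hasDerivAt_id u).prodMk (hasDerivAt_const u v)

lemma line_v (u : ℝ) (v : ℝ) : HasDerivAt (fun v' : ℝ => (u, v')) ((0 : ℝ), (1 : ℝ)) v :=
  (hasDerivAt_const v u).prodMk (hasDerivAt_id v)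

lemma hasDerivAt_u (hC2 : ContDiff ℝ 2 Ω) (u v : ℝ) :
    HasDerivAt (fun u' => Ω (u', v)) (fderiv ℝ Ω (u, v) (1, 0)) u :=
  ((hC2.differentiable (by norm_num) (u, v)).hasFDerivAt).comp_hasDerivAt u (line_u v u)

lemma hasDerivAt_v (hC2 : ContDiff ℝ 2 Ω) (u v : ℝ) :
    HasDerivAt (fun v' => Ω (u, v')) (fderiv ℝ Ω (u, v) (0, 1)) v :=
  ((hC2.differentiable (by norm_num) (u, v)).hasFDerivAt).comp_hasDerivAt v (line_v u v)

lemma diff_fderiv (hC2 : ContDiff ℝ 2 Ω) : Differentiable ℝ (fderiv ℝ Ω) :=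
  (hC2.fderiv_right (le_refl _)).differentiable one_ne_zero

lemma hasDerivAt_A (hC2 : ContDiff ℝ 2 Ω) (w : ℝ × ℝ) (u v : ℝ) :
    HasDerivAt (fun u' => fderiv ℝ Ω (u', v) w)
      (fderiv ℝ (fderiv ℝ Ω) (u, v) (1, 0) w) u := by
  have h1 : HasFDerivAt (fun q => fderiv ℝ Ω q w)
      (((fderiv ℝ (fderiv ℝ Ω) (u, v)).flip) w) (u, v) := by
    have := ((diff_fderiv hC2) (u, v)).hasFDerivAt.clm_apply (hasFDerivAt_const w (u, v))
    simpa using this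
  have := h1.comp_hasDerivAt u (line_u v u)
  exact this

lemma hasDerivAt_B (hC2 : ContDiff ℝ 2 Ω) (w : ℝ × ℝ) (u v : ℝ) :
    HasDerivAt (fun v' => fderiv ℝ Ω (u, v') w)
      (fderiv ℝ (fderiv ℝ Ω) (u, v) (0, 1) w) v := by
  have h1 : HasFDerivAt (fun q => fderiv ℝ Ω q w)
      (((fderiv ℝ (fderiv ℝ Ω) (u, v)).flip) w) (u, v) := by
    have := ((diff_fderiv hC2) (u, v)).hasFDerivAt.clm_apply (hasFDerivAt_const w (u, v))
    simpa using this
  have := h1.comp_hasDerivAt v (line_v u v)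
  exact this

end Omega

section Bounds
variable {Ω : ℝ × ℝ → ℝ}

lemma norm_e1 : ‖((1 : ℝ), (0 : ℝ))‖ = 1 := by
  rw [Prod.norm_def]; simp

lemma norm_e2 : ‖((0 : ℝ), (1 : ℝ))‖ = 1 := by
  rw [Prod.norm_def]; simp

lemma bound_fd1 (p : ℝ × ℝ) (w : ℝ × ℝ) (hw : ‖w‖ ≤ 1) :
    |fderiv ℝ Ω p w| ≤ ‖iteratedFDeriv ℝ 1 Ω p‖ := by
  have h1 : fderiv ℝ Ω p w = iteratedFDeriv ℝ 1 Ω p ![w] := by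
    rw [iteratedFDeriv_one_apply]; simp
  rw [h1, ← Real.norm_eq_abs]
  calc ‖iteratedFDeriv ℝ 1 Ω p ![w]‖
      ≤ ‖iteratedFDeriv ℝ 1 Ω p‖ * ∏ i, ‖(![w] : Fin 1 → ℝ × ℝ) i‖ :=
        ContinuousMultilinearMap.le_opNorm _ _
    _ ≤ ‖iteratedFDeriv ℝ 1 Ω p‖ * 1 := by
        refine mul_le_mul_of_nonneg_left ?_ (norm_nonneg _)
        simpa using hw
    _ = _ := mul_one _

lemma bound_fd2 (p : ℝ × ℝ) (w₁ w₂ : ℝ × ℝ) (h1 : ‖w₁‖ ≤ 1) (h2 : ‖w₂‖ ≤ 1) :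
    |fderiv ℝ (fderiv ℝ Ω) p w₁ w₂| ≤ ‖iteratedFDeriv ℝ 2 Ω p‖ := by
  have he : fderiv ℝ (fderiv ℝ Ω) p w₁ w₂ = iteratedFDeriv ℝ 2 Ω p ![w₁, w₂] := by
    rw [iteratedFDeriv_two_apply]; simp
  rw [he, ← Real.norm_eq_abs]
  calc ‖iteratedFDeriv ℝ 2 Ω p ![w₁, w₂]‖
      ≤ ‖iteratedFDeriv ℝ 2 Ω p‖ * ∏ i, ‖(![w₁, w₂] : Fin 2 → ℝ × ℝ) i‖ :=
        ContinuousMultilinearMap.le_opNorm _ _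
    _ ≤ ‖iteratedFDeriv ℝ 2 Ω p‖ * (1 * 1) := by
        rw [Fin.prod_univ_two]
        refine mul_le_mul_of_nonneg_left ?_ (norm_nonneg _)
        simp only [Matrix.cons_val_zero, Matrix.cons_val_one, Matrix.head_cons]
        exact mul_le_mul h1 h2 (norm_nonneg _) zero_le_one
    _ = _ := by ring

end Bounds

lemma tendsto_weight {δ : ℝ} (hδ : 0 < δ) {l : Filter ℝ}
    (hl : Tendsto (fun v : ℝ => |v|) l atTop) :
    Tendsto (fun v : ℝ => (1 + |v|) * Real.cosh v ^ (-δ)) l (𝓝 0) := by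
  refine squeeze_zero_norm (fun v => ?_)
    (f := fun v => (1 + |v|) * Real.cosh v ^ (-δ))
    (a := fun v => ((1 + 2/δ) * 2 ^ δ) * Real.exp (-(δ/2 * |v|))) ?_
  · rw [Real.norm_eq_abs, abs_of_nonneg (by positivity)]
    exact weight_le hδ v
  · have h1 : Tendsto (fun v : ℝ => -(δ/2 * |v|)) l atBot := by
      apply tendsto_neg_atTop_atBot.comp
      exact (tendsto_const_mul_atTop_of_pos (by positivity)).mpr hl
    have h2 : Tendsto (fun v : ℝ => Real.exp (-(δ/2 * |v|))) l (𝓝 0) :=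
      Real.tendsto_exp_atBot.comp h1
    have := h2.const_mul ((1 + 2/δ) * 2 ^ δ)
    simpa using this

lemma continuous_tanh : Continuous Real.tanh :=
  continuous_iff_continuousAt.mpr fun x => (hasDerivAt_tanh x).continuousAt

lemma continuous_psi : Continuous psi := by
  unfold psi
  exact continuous_const.sub (continuous_id.mul continuous_tanh)

lemma continuous_psi' : Continuous psi' := by
  unfold psi'
  exact (continuous_tanh.neg).sub
    (continuous_id.div (Real.continuous_cosh.pow 2) (fun x => by positivity))

theorem jacobi_orthogonality (Ω : ℝ × ℝ → ℝ) (hC2 : ContDiff ℝ 2 Ω)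
    (hper : ∀ u v : ℝ, Ω (u + 2 * Real.pi, v) = Ω (u, v))
    (hdecay : ∃ δ > (0 : ℝ), ∃ C > (0 : ℝ), ∀ u v : ℝ,
      |Ω (u, v)| + ‖iteratedFDeriv ℝ 1 Ω (u, v)‖ + ‖iteratedFDeriv ℝ 2 Ω (u, v)‖
        ≤ C * Real.cosh v ^ (-δ)) :
    ∫ p in (Set.Icc (0 : ℝ) (2 * Real.pi)) ×ˢ (Set.univ : Set ℝ),
      (1 - p.2 * Real.tanh p.2) *
        (deriv (fun u' => deriv (fun u'' => Ω (u'', p.2)) u') p.1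
          + deriv (fun v' => deriv (fun v'' => Ω (p.1, v'')) v') p.2
          + 2 * Ω p / Real.cosh p.2 ^ 2) = 0 := by
  classical
  open Real MeasureTheory Set Filter Topology in
  obtain ⟨δ, hδ, C, hCpos, hbound⟩ := hdecay
  set s : Set ℝ := Set.Icc (0 : ℝ) (2 * Real.pi) with hs
  set D : ℝ × ℝ → (ℝ × ℝ) →L[ℝ] (ℝ × ℝ) →L[ℝ] ℝ := fderiv ℝ (fderiv ℝ Ω) with hD
  set G1 : ℝ × ℝ → ℝ := fun p => psi p.2 * (D p (1, 0) (1, 0)) with hG1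
  set G2 : ℝ × ℝ → ℝ := fun p =>
    psi p.2 * (D p (0, 1) (0, 1) + 2 * Ω p / Real.cosh p.2 ^ 2) with hG2
  -- continuity facts
  have hΩc : Continuous Ω := hC2.continuous
  have hfd1 : ContDiff ℝ 1 (fderiv ℝ Ω) := hC2.fderiv_right (le_refl _)
  have hfdc : Continuous (fderiv ℝ Ω) := hfd1.continuous
  have hDc : Continuous D := hfd1.continuous_fderiv one_ne_zero
  have hcosh2 : ∀ v : ℝ, Real.cosh v ^ 2 ≠ 0 := fun v => by positivity
  have hG1c : Continuous G1 := by
    apply (continuous_psi.comp continuous_snd).mul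
    exact ((hDc.clm_apply continuous_const).clm_apply continuous_const)
  have hG2c : Continuous G2 := by
    apply (continuous_psi.comp continuous_snd).mul
    apply ((hDc.clm_apply continuous_const).clm_apply continuous_const).add
    exact (continuous_const.mul hΩc).div
      ((Real.continuous_cosh.comp continuous_snd).pow 2) (fun p => hcosh2 p.2)
  -- pointwise decay bounds
  have hb0 : ∀ p : ℝ × ℝ, |Ω p| ≤ C * Real.cosh p.2 ^ (-δ) := by
    intro p
    have := hbound p.1 p.2
    have h1 := norm_nonneg (iteratedFDeriv ℝ 1 Ω (p.1, p.2))
    have h2 := norm_nonneg (iteratedFDeriv ℝ 2 Ω (p.1, p.2))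
    simp only [Prod.mk.eta] at this
    linarith
  have hb1 : ∀ (p : ℝ × ℝ) (w : ℝ × ℝ), ‖w‖ ≤ 1 →
      |fderiv ℝ Ω p w| ≤ C * Real.cosh p.2 ^ (-δ) := by
    intro p w hw
    have := hbound p.1 p.2
    simp only [Prod.mk.eta] at this
    have h0 := abs_nonneg (Ω p)
    have h2 := norm_nonneg (iteratedFDeriv ℝ 2 Ω p)
    have := bound_fd1 (Ω := Ω) p w hw
    linarith [hbound p.1 p.2, bound_fd1 (Ω := Ω) p w hw]
  have hb2 : ∀ (p : ℝ × ℝ) (w₁ w₂ : ℝ × ℝ), ‖w₁‖ ≤ 1 → ‖w₂‖ ≤ 1 →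
      |D p w₁ w₂| ≤ C * Real.cosh p.2 ^ (-δ) := by
    intro p w₁ w₂ h1 h2
    have h0 := abs_nonneg (Ω p)
    have hn1 := norm_nonneg (iteratedFDeriv ℝ 1 Ω p)
    have hB := hbound p.1 p.2
    simp only [Prod.mk.eta] at hB
    have := bound_fd2 (Ω := Ω) p w₁ w₂ h1 h2
    rw [hD]
    linarith
  -- bound for G1 and G2
  have hwpos : ∀ v : ℝ, (0:ℝ) < Real.cosh v ^ (-δ) :=
    fun v => Real.rpow_pos_of_pos (Real.cosh_pos v) _
  have hboundG1 : ∀ p : ℝ × ℝ, |G1 p| ≤ 4 * C * ((1 + |p.2|) * Real.cosh p.2 ^ (-δ)) := by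
    intro p
    rw [hG1, abs_mul]
    calc |psi p.2| * |D p (1,0) (1,0)|
        ≤ (1 + |p.2|) * (C * Real.cosh p.2 ^ (-δ)) := by
          apply mul_le_mul (abs_psi_le p.2) (hb2 p _ _ (le_of_eq norm_e1) (le_of_eq norm_e1))
            (abs_nonneg _) (by positivity)
      _ = C * ((1 + |p.2|) * Real.cosh p.2 ^ (-δ)) := by ring
      _ ≤ 4 * C * ((1 + |p.2|) * Real.cosh p.2 ^ (-δ)) := by
          apply mul_le_mul_of_nonneg_right (by linarith) (by positivity)
  have hboundG2 : ∀ p : ℝ × ℝ, |G2 p| ≤ 4 * C * ((1 + |p.2|) * Real.cosh p.2 ^ (-δ)) := by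
    intro p
    rw [hG2, abs_mul]
    have hc1 : (1:ℝ) ≤ Real.cosh p.2 ^ 2 := by nlinarith [Real.one_le_cosh p.2]
    have hd : |2 * Ω p / Real.cosh p.2 ^ 2| ≤ 2 * (C * Real.cosh p.2 ^ (-δ)) := by
      rw [abs_div, abs_mul, abs_two, abs_of_pos (by positivity : (0:ℝ) < Real.cosh p.2 ^ 2)]
      calc (2:ℝ) * |Ω p| / Real.cosh p.2 ^ 2 ≤ 2 * |Ω p| := div_le_self (by positivity) hc1
        _ ≤ 2 * (C * Real.cosh p.2 ^ (-δ)) := by linarith [hb0 p]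
    calc |psi p.2| * |D p (0,1) (0,1) + 2 * Ω p / Real.cosh p.2 ^ 2|
        ≤ (1 + |p.2|) * (C * Real.cosh p.2 ^ (-δ) + 2 * (C * Real.cosh p.2 ^ (-δ))) := by
          apply mul_le_mul (abs_psi_le p.2) ?_ (abs_nonneg _) (by positivity)
          calc |D p (0,1) (0,1) + 2 * Ω p / Real.cosh p.2 ^ 2|
              ≤ |D p (0,1) (0,1)| + |2 * Ω p / Real.cosh p.2 ^ 2| := abs_add_le _ _
            _ ≤ _ := add_le_add (hb2 p _ _ (le_of_eq norm_e2) (le_of_eq norm_e2)) hd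
      _ = 3 * C * ((1 + |p.2|) * Real.cosh p.2 ^ (-δ)) := by ring
      _ ≤ 4 * C * ((1 + |p.2|) * Real.cosh p.2 ^ (-δ)) := by
          apply mul_le_mul_of_nonneg_right (by linarith) (by positivity)
  -- integrand equals G1 + G2
  have hrw : ∀ p : ℝ × ℝ, (1 - p.2 * Real.tanh p.2) *
        (deriv (fun u' => deriv (fun u'' => Ω (u'', p.2)) u') p.1
          + deriv (fun v' => deriv (fun v'' => Ω (p.1, v'')) v') p.2
          + 2 * Ω p / Real.cosh p.2 ^ 2) = G1 p + G2 p := by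
    rintro ⟨u, v⟩
    have hiu : deriv (fun u'' => Ω (u'', v)) = fun x => fderiv ℝ Ω (x, v) (1, 0) :=
      funext fun x => (hasDerivAt_u hC2 x v).deriv
    have hiv : deriv (fun v'' => Ω (u, v'')) = fun x => fderiv ℝ Ω (u, x) (0, 1) :=
      funext fun x => (hasDerivAt_v hC2 u x).deriv
    simp only [hG1, hG2, hD]
    rw [hiu, hiv, (hasDerivAt_A hC2 (1,0) u v).deriv, (hasDerivAt_B hC2 (0,1) u v).deriv]
    simp only [psi]
    ring
  -- integrability
  have hfin : IsFiniteMeasure (volume.restrict s) :=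
    ⟨by rw [Measure.restrict_apply_univ]; exact measure_Icc_lt_top⟩
  have hdomint : Integrable (fun p : ℝ × ℝ => (1:ℝ) * (4 * C * ((1 + |p.2|) * Real.cosh p.2 ^ (-δ))))
      ((volume.restrict s).prod volume) :=
    (integrable_const (1:ℝ)).mul_prod ((integrable_weight hδ).const_mul (4*C))
  have key : ∀ H : ℝ × ℝ → ℝ, Continuous H →
      (∀ p : ℝ × ℝ, |H p| ≤ 4 * C * ((1 + |p.2|) * Real.cosh p.2 ^ (-δ))) →
      Integrable H ((volume.restrict s).prod volume) := by
    intro H hHc hHb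
    refine Integrable.mono' hdomint hHc.aestronglyMeasurable ?_
    filter_upwards with p
    rw [Real.norm_eq_abs]
    simpa using hHb p
  have hIntG1 : Integrable G1 ((volume.restrict s).prod volume) := key G1 hG1c hboundG1
  have hIntG2 : Integrable G2 ((volume.restrict s).prod volume) := key G2 hG2c hboundG2
  have hmeas : (volume : Measure (ℝ × ℝ)).restrict (s ×ˢ (Set.univ : Set ℝ))
      = (volume.restrict s).prod volume := by
    rw [Measure.volume_eq_prod, ← Measure.prod_restrict, Measure.restrict_univ]
  -- u-periodicity of the first partial derivative
  have hA_per : ∀ v : ℝ, fderiv ℝ Ω (2 * Real.pi, v) (1, 0) = fderiv ℝ Ω (0, v) (1, 0) := by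
    intro v
    have hfun : (fun u' : ℝ => Ω (u' + 2 * Real.pi, v)) = fun u' => Ω (u', v) :=
      funext fun x => hper x v
    have h1 : deriv (fun u' : ℝ => Ω (u' + 2 * Real.pi, v)) 0
        = deriv (fun u'' => Ω (u'', v)) (0 + 2 * Real.pi) := by
      exact deriv_comp_add_const (f := fun t => Ω (t, v)) (a := 2 * Real.pi) (x := 0)
    rw [hfun, (hasDerivAt_u hC2 0 v).deriv, zero_add, (hasDerivAt_u hC2 (2 * Real.pi) v).deriv]
      at h1
    exact h1.symm
  -- the u-lines integral of G1 vanishes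
  have h1zero : ∀ v : ℝ, (∫ u in s, G1 (u, v)) = 0 := by
    intro v
    have hmul : (∫ u in s, G1 (u, v))
        = psi v * ∫ u in s, D (u, v) (1, 0) (1, 0) := by
      simp only [hG1]
      exact MeasureTheory.integral_const_mul _ _
    have hval : (∫ u in s, D (u, v) (1, 0) (1, 0))
        = fderiv ℝ Ω (2 * Real.pi, v) (1, 0) - fderiv ℝ Ω (0, v) (1, 0) := by
      have hcont : Continuous (fun x : ℝ => D (x, v) (1, 0) (1, 0)) :=
        ((hDc.comp (continuous_id.prodMk continuous_const)).clm_apply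
          continuous_const).clm_apply continuous_const
      rw [hs, MeasureTheory.integral_Icc_eq_integral_Ioc,
        ← intervalIntegral.integral_of_le (by positivity : (0:ℝ) ≤ 2 * Real.pi)]
      exact intervalIntegral.integral_eq_sub_of_hasDerivAt
        (fun x _ => hasDerivAt_A hC2 (1, 0) x v)
        (hcont.intervalIntegrable 0 (2 * Real.pi))
    rw [hmul, hval, hA_per v, sub_self, mul_zero]
  -- the v-lines integral of G2 vanishes
  have h2zero : ∀ u : ℝ, (∫ v : ℝ, G2 (u, v)) = 0 := by
    intro u
    set F : ℝ → ℝ := fun v => psi v * fderiv ℝ Ω (u, v) (0, 1) - psi' v * Ω (u, v) with hF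
    have hFd : ∀ v : ℝ, HasDerivAt F (G2 (u, v)) v := by
      intro v
      have h1 := (hasDerivAt_psi v).mul (hasDerivAt_B hC2 (0, 1) u v)
      have h2 := (hasDerivAt_psi' v).mul (hasDerivAt_v hC2 u v)
      have h := h1.sub h2
      refine h.congr_deriv (Eq.symm ?_)
      simp only [hG2, hD]
      ring
    have hG2cl : Continuous (fun v => G2 (u, v)) :=
      hG2c.comp (continuous_const.prodMk continuous_id)
    have hG2int : Integrable (fun v => G2 (u, v)) := by
      refine Integrable.mono' ((integrable_weight hδ).const_mul (4 * C))
        hG2cl.aestronglyMeasurable ?_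
      filter_upwards with v
      rw [Real.norm_eq_abs]
      simpa using hboundG2 (u, v)
    have hFb : ∀ v : ℝ, ‖F v‖ ≤ 2 * C * ((1 + |v|) * Real.cosh v ^ (-δ)) := by
      intro v
      rw [Real.norm_eq_abs, hF]
      calc |psi v * fderiv ℝ Ω (u, v) (0, 1) - psi' v * Ω (u, v)|
          ≤ |psi v| * |fderiv ℝ Ω (u, v) (0, 1)| + |psi' v| * |Ω (u, v)| := by
            refine (abs_sub _ _).trans ?_
            rw [abs_mul, abs_mul]
        _ ≤ (1 + |v|) * (C * Real.cosh v ^ (-δ)) + (1 + |v|) * (C * Real.cosh v ^ (-δ)) :=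
            add_le_add
              (mul_le_mul (abs_psi_le v) (hb1 (u, v) _ (le_of_eq norm_e2)) (abs_nonneg _)
                (by positivity))
              (mul_le_mul (abs_psi'_le v) (hb0 (u, v)) (abs_nonneg _) (by positivity))
        _ = 2 * C * ((1 + |v|) * Real.cosh v ^ (-δ)) := by ring
    have hFtop : Filter.Tendsto F Filter.atTop (nhds 0) := by
      refine squeeze_zero_norm hFb ?_
      have := (tendsto_weight hδ tendsto_abs_atTop_atTop).const_mul (2 * C)
      simpa using this
    have hFbot : Filter.Tendsto F Filter.atBot (nhds 0) := by
      refine squeeze_zero_norm hFb ?_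
      have := (tendsto_weight hδ tendsto_abs_atBot_atTop).const_mul (2 * C)
      simpa using this
    calc (∫ v : ℝ, G2 (u, v))
        = (∫ v in Set.Iic (0:ℝ), G2 (u, v)) + ∫ v in Set.Ioi (0:ℝ), G2 (u, v) :=
          (intervalIntegral.integral_Iic_add_Ioi hG2int.integrableOn hG2int.integrableOn).symm
      _ = (F 0 - 0) + (0 - F 0) := by
          rw [MeasureTheory.integral_Iic_of_hasDerivAt_of_tendsto' (fun x _ => hFd x)
              hG2int.integrableOn hFbot,
            MeasureTheory.integral_Ioi_of_hasDerivAt_of_tendsto' (fun x _ => hFd x)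
              hG2int.integrableOn hFtop]
      _ = 0 := by ring
  -- assemble
  calc ∫ p in s ×ˢ (Set.univ : Set ℝ),
      (1 - p.2 * Real.tanh p.2) *
        (deriv (fun u' => deriv (fun u'' => Ω (u'', p.2)) u') p.1
          + deriv (fun v' => deriv (fun v'' => Ω (p.1, v'')) v') p.2
          + 2 * Ω p / Real.cosh p.2 ^ 2)
      = ∫ p in s ×ˢ (Set.univ : Set ℝ), (G1 p + G2 p) :=
        MeasureTheory.setIntegral_congr_fun (measurableSet_Icc.prod MeasurableSet.univ)
          (fun p _ => hrw p)
    _ = ∫ p, (G1 p + G2 p) ∂((volume.restrict s).prod volume) := by rw [← hmeas]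
    _ = (∫ p, G1 p ∂((volume.restrict s).prod volume))
        + ∫ p, G2 p ∂((volume.restrict s).prod volume) :=
        MeasureTheory.integral_add hIntG1 hIntG2
    _ = 0 + 0 := by
        congr 1
        · rw [MeasureTheory.integral_prod_symm G1 hIntG1]
          simp only [h1zero, MeasureTheory.integral_zero]
        · rw [MeasureTheory.integral_prod G2 hIntG2]
          simp only [h2zero, MeasureTheory.integral_zero]
    _ = 0 := by ring
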